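/- Let n > 1. The function χ_κ : A_n(q) → ℂ defined by χ_κ(g) = q^{n−2}·θ(g_{1,n}) if g − 1 ∈ F_q·e_{1,n} and χ_κ(g) = 0 otherwise is a character of A_n(q), and it equals the sum of q^{n−2} distinct group homomorphisms A_n(q) → ℂ^×. -/

import Mathlib

open scoped BigOperators Classical ComplexOrder
open Complex

set_option linter.unusedSectionVars false

noncomputable section

namespace Paper

variable {F : Type*} [Field F]

/-! ### Characters of finite groups -/

/-- `f : G → ℂ` is the character of some finite-dimensional complex representation. -/
def IsCharacter {G : Type} [Monoid G] (f : G → ℂ) : Prop :=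
  ∃ V : FDRep ℂ G, V.character = f

/-- `f : G → ℂ` is the character of some irreducible finite-dimensional complex
representation. -/
def IsIrreducibleCharacter {G : Type} [Monoid G] (f : G → ℂ) : Prop :=
  ∃ V : FDRep ℂ G, CategoryTheory.Simple V ∧ V.character = f

/-- The standard inner product `⟨f, h⟩ = |G|⁻¹ ∑ₓ f x conj (h x)` on complex-valued
functions on a finite group. -/
def cinner (G : Type*) (f h : G → ℂ) : ℂ :=
  (Nat.card G : ℂ)⁻¹ * ∑ᶠ x : G, f x * (starRingEnd ℂ) (h x)

/-- Induction of a complex-valued function from (the subset underlying) a subgroup `H` of a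
finite group `G`, via the Frobenius formula
`Ind_H^G(f)(g) = |H|⁻¹ ∑_{x ∈ G, xgx⁻¹ ∈ H} f (xgx⁻¹)`. -/
def indFun {G : Type*} [Group G] (H : Set G) (f : G → ℂ) : G → ℂ := fun g =>
  (Nat.card H : ℂ)⁻¹ * ∑ᶠ x : G, if x * g * x⁻¹ ∈ H then f (x * g * x⁻¹) else 0

/-- The set of elements of the `m`-th cyclotomic field `ℚ(ζ_m) ⊆ ℂ`, where
`ζ_m = exp (2πi/m)`. -/
def cycField (m : ℕ) : Set ℂ :=
  (Algebra.adjoin ℚ {Complex.exp (2 * Real.pi * Complex.I / m)} : Subalgebra ℚ ℂ)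

/-! ### Algebra groups of matrix algebras -/

variable {n : ℕ}

/-- The subgroup `1 + S` of invertible matrices, for `S` a non-unital subalgebra of the
matrix algebra (for example the algebra of strictly upper triangular matrices). -/
def grp [Fintype F] (S : NonUnitalSubalgebra F (Matrix (Fin n) (Fin n) F)) :
    Subgroup (Matrix (Fin n) (Fin n) F)ˣ where
  carrier := {g | (g : Matrix (Fin n) (Fin n) F) - 1 ∈ S}
  one_mem' := by
    show ((1 : (Matrix (Fin n) (Fin n) F)ˣ) : Matrix (Fin n) (Fin n) F) - 1 ∈ S
    rw [Units.val_one, sub_self]; exact zero_mem S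
  mul_mem' := by
    intro a b ha hb
    show ((a * b : (Matrix (Fin n) (Fin n) F)ˣ) : Matrix (Fin n) (Fin n) F) - 1 ∈ S
    have h : ((a * b : (Matrix (Fin n) (Fin n) F)ˣ) : Matrix (Fin n) (Fin n) F) - 1 =
        ((a : Matrix (Fin n) (Fin n) F) - 1) + ((b : Matrix (Fin n) (Fin n) F) - 1) +
          ((a : Matrix (Fin n) (Fin n) F) - 1) * ((b : Matrix (Fin n) (Fin n) F) - 1) := by
      rw [Units.val_mul]; noncomm_ring
    rw [h]
    exact add_mem (add_mem ha hb) (mul_mem ha hb)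
  inv_mem' := by
    intro a ha
    show ((a⁻¹ : (Matrix (Fin n) (Fin n) F)ˣ) : Matrix (Fin n) (Fin n) F) - 1 ∈ S
    have hpow : ∀ m : ℕ, ((a ^ m : (Matrix (Fin n) (Fin n) F)ˣ) : Matrix (Fin n) (Fin n) F)
        - 1 ∈ S := by
      intro m
      induction m with
      | zero => rw [pow_zero, Units.val_one, sub_self]; exact zero_mem S
      | succ m ih =>
          rw [pow_succ, Units.val_mul]
          have h : ((a ^ m : (Matrix (Fin n) (Fin n) F)ˣ) : Matrix (Fin n) (Fin n) F) *
              (a : Matrix (Fin n) (Fin n) F) - 1 =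
              (((a ^ m : (Matrix (Fin n) (Fin n) F)ˣ) : Matrix (Fin n) (Fin n) F) - 1) +
              ((a : Matrix (Fin n) (Fin n) F) - 1) +
              (((a ^ m : (Matrix (Fin n) (Fin n) F)ˣ) : Matrix (Fin n) (Fin n) F) - 1) *
              ((a : Matrix (Fin n) (Fin n) F) - 1) := by noncomm_ring
          rw [h]
          exact add_mem (add_mem ih ha) (mul_mem ih ha)
    have hk : 0 < orderOf a := orderOf_pos a
    have hinv : a⁻¹ = a ^ (orderOf a - 1) := by
      have h1 : a ^ (orderOf a - 1) * a = 1 := by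
        rw [← pow_succ, Nat.sub_add_cancel hk, pow_orderOf_eq_one]
      exact (eq_inv_of_mul_eq_one_left h1).symm
    rw [hinv]
    exact hpow _

variable [Fintype F] {S : NonUnitalSubalgebra F (Matrix (Fin n) (Fin n) F)}

lemma mem_grp_iff {g : (Matrix (Fin n) (Fin n) F)ˣ} :
    g ∈ grp S ↔ (g : Matrix (Fin n) (Fin n) F) - 1 ∈ S := Iff.rfl

/-- The underlying matrix of an element of an algebra group. -/
def mat (g : ↥(grp S)) : Matrix (Fin n) (Fin n) F :=
  ((g : (Matrix (Fin n) (Fin n) F)ˣ) : Matrix (Fin n) (Fin n) F)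

lemma mat_mem (g : ↥(grp S)) : mat g - 1 ∈ S := g.2

/-- `g - 1` as an element of the algebra `S`. -/
def gsub (g : ↥(grp S)) : ↥S := ⟨mat g - 1, mat_mem g⟩

/-- The dual space of `F`-linear functionals on the algebra `S`. -/
abbrev Dual (S : NonUnitalSubalgebra F (Matrix (Fin n) (Fin n) F)) := ↥S →ₗ[F] F

/-- The function `θ_λ(g) = θ(λ(g-1))` on the algebra group `1 + S`. -/
def thetaFun (θ : AddChar F ℂ) (lam : Dual S) : ↥(grp S) → ℂ := fun g => θ (lam (gsub g))

lemma conj_mem (a b : ↥(grp S)) {X : Matrix (Fin n) (Fin n) F} (hX : X ∈ S) :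
    mat a * X * mat b ∈ S := by
  have h : mat a * X * mat b =
      X + (mat a - 1) * X + X * (mat b - 1) + (mat a - 1) * X * (mat b - 1) := by noncomm_ring
  rw [h]
  exact add_mem (add_mem (add_mem hX (mul_mem (mat_mem a) hX)) (mul_mem hX (mat_mem b)))
    (mul_mem (mul_mem (mat_mem a) hX) (mat_mem b))

/-- The functional `X ↦ λ(a · X · b)`, used to define the various actions of an algebra group
on the dual space of its algebra. -/
def conjDual (a b : ↥(grp S)) (lam : Dual S) : Dual S where
  toFun X := lam ⟨mat a * (X : Matrix (Fin n) (Fin n) F) * mat b, conj_mem a b X.2⟩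
  map_add' X Y := by
    rw [← map_add]
    exact congrArg lam (Subtype.ext (by simp [mul_add, add_mul]))
  map_smul' c X := by
    rw [RingHom.id_apply, ← map_smul]
    exact congrArg lam (Subtype.ext (by simp [Matrix.mul_smul, Matrix.smul_mul]))

/-- The left orbit `Gλ` of `λ` under `(gλ)(X) = λ(g⁻¹X)`. -/
def leftOrbit (lam : Dual S) : Set (Dual S) := {ν | ∃ g : ↥(grp S), ν = conjDual g⁻¹ 1 lam}

/-- The two-sided orbit `GλG` of `λ` under `(gλh)(X) = λ(g⁻¹Xh⁻¹)`. -/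
def biOrbit (lam : Dual S) : Set (Dual S) := {ν | ∃ g h : ↥(grp S), ν = conjDual g⁻¹ h⁻¹ lam}

/-- The coadjoint orbit of `λ` under `λ^g(X) = λ(gXg⁻¹)`. -/
def coadjOrbit (lam : Dual S) : Set (Dual S) := {ν | ∃ g : ↥(grp S), ν = conjDual g g⁻¹ lam}

/-- The supercharacter `χ_λ = (|Gλ|/|GλG|) ∑_{ν ∈ GλG} θ_ν`. -/
def superChar (θ : AddChar F ℂ) (lam : Dual S) : ↥(grp S) → ℂ := fun g =>
  ((Nat.card (leftOrbit lam) : ℂ) / (Nat.card (biOrbit lam) : ℂ)) *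
    ∑ᶠ ν ∈ biOrbit lam, thetaFun θ ν g

/-- The Kirillov function `ψ_λ = |λ^G|^{-1/2} ∑_{ν ∈ λ^G} θ_ν`. -/
def kirillov (θ : AddChar F ℂ) (lam : Dual S) : ↥(grp S) → ℂ := fun g =>
  ((Real.sqrt (Nat.card (coadjOrbit lam)) : ℂ))⁻¹ * ∑ᶠ ν ∈ coadjOrbit lam, thetaFun θ ν g


/-! ### The strictly upper triangular algebra -/

/-- The `F`-algebra of strictly upper triangular `n × n` matrices. -/
def uAlg (n : ℕ) (F : Type*) [Field F] :
    NonUnitalSubalgebra F (Matrix (Fin n) (Fin n) F) :=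
  Submodule.toNonUnitalSubalgebra
    { carrier := {M | ∀ i j : Fin n, j ≤ i → M i j = 0}
      add_mem' := fun ha hb i j hij => by
        rw [Matrix.add_apply, ha i j hij, hb i j hij, add_zero]
      zero_mem' := fun i j _ => rfl
      smul_mem' := fun c a ha i j hij => by
        rw [Matrix.smul_apply, ha i j hij, smul_zero] }
    (by
      intro X Y hX hY i j hij
      rw [Matrix.mul_apply]
      refine Finset.sum_eq_zero fun k _ => ?_
      by_cases hk : k ≤ i
      · rw [hX i k hk, zero_mul]
      · rw [hY k j (hij.trans (not_le.mp hk).le), mul_zero])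

lemma mem_uAlg {M : Matrix (Fin n) (Fin n) F} :
    M ∈ uAlg n F ↔ ∀ i j : Fin n, j ≤ i → M i j = 0 := Iff.rfl

/-! ### The chain of subspaces `l^i ⊆ ⋯ ⊆ s^i` attached to a linear functional -/

section Chain

variable {A : Type*} [NonUnitalRing A] [Module F A] [SMulCommClass F A A] [IsScalarTower F A A]

/-- For subspaces `s, t` of an algebra, the subspace `{x ∈ s | λ(x·t) = 0}`. -/
def lker (lam : A →ₗ[F] F) (s t : Submodule F A) : Submodule F A where
  carrier := {x | x ∈ s ∧ ∀ y ∈ t, lam (x * y) = 0}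
  add_mem' := fun ha hb => ⟨s.add_mem ha.1 hb.1, fun y hy => by
    rw [add_mul, map_add, ha.2 y hy, hb.2 y hy, add_zero]⟩
  zero_mem' := ⟨s.zero_mem, fun y _ => by rw [zero_mul, map_zero]⟩
  smul_mem' := fun c a ha => ⟨s.smul_mem c ha.1, fun y hy => by
    rw [smul_mul_assoc, map_smul, ha.2 y hy, smul_zero]⟩

/-- The pair of subspaces `(l^i, s^i)` defined inductively by `l⁰ = 0`, `s⁰ = n`,
`l^{i+1} = {X ∈ s^i : λ(X·s^i) = 0}`, `s^{i+1} = {X ∈ s^i : λ(X·l^{i+1}) = 0}`. -/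
def chain (lam : A →ₗ[F] F) : ℕ → Submodule F A × Submodule F A
  | 0 => (⊥, ⊤)
  | i + 1 =>
    (lker lam (chain lam i).2 (chain lam i).2,
     lker lam (chain lam i).2 (lker lam (chain lam i).2 (chain lam i).2))

/-- The subspace `l^i_λ`. -/
def lC (lam : A →ₗ[F] F) (i : ℕ) : Submodule F A := (chain lam i).1

/-- The subspace `s^i_λ`. -/
def sC (lam : A →ₗ[F] F) (i : ℕ) : Submodule F A := (chain lam i).2

/-- The terminal subspace `l̄_λ` of the ascending chain `l¹ ⊆ l² ⊆ ⋯`. -/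
def lbar (lam : A →ₗ[F] F) : Submodule F A := ⨆ i, lC lam i

/-- The terminal subspace `s̄_λ` of the descending chain `s¹ ⊇ s² ⊇ ⋯`. -/
def sbar (lam : A →ₗ[F] F) : Submodule F A := ⨅ i, sC lam i

end Chain

/-- The underlying set of the algebra subgroup `L̄_λ = 1 + l̄_λ`. -/
def Lset (lam : Dual S) : Set ↥(grp S) := {g | gsub g ∈ lbar lam}

/-- The underlying set of the algebra subgroup `S̄_λ = 1 + s̄_λ`. -/
def Sset (lam : Dual S) : Set ↥(grp S) := {g | gsub g ∈ sbar lam}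

/-- The character `ξ_λ = Ind_{L̄_λ}^G (θ_λ)`. -/
def xiChar (θ : AddChar F ℂ) (lam : Dual S) : ↥(grp S) → ℂ :=
  indFun (Lset lam) (thetaFun θ lam)

/-! ### Quasi-monomial functionals and shapes -/

/-- The value `λ_{ij} = λ(e_{ij})` (interpreted as `0` when `e_{ij} ∉ S`). -/
def lamEntry (lam : Dual S) (i j : Fin n) : F :=
  if h : Matrix.single i j (1 : F) ∈ S then lam ⟨_, h⟩ else 0

/-- A functional is quasi-monomial if the matrix `(λ_{ij})` has at most one nonzero entry in
each row and in each column. -/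
def QuasiMonomial (lam : Dual S) : Prop :=
  (∀ i j k : Fin n, lamEntry lam i j ≠ 0 → lamEntry lam i k ≠ 0 → j = k) ∧
  (∀ i j k : Fin n, lamEntry lam i k ≠ 0 → lamEntry lam j k ≠ 0 → i = j)

/-- The parts of the shape of `λ`: the equivalence classes of the finest equivalence
relation for which `i ∼ j` whenever `λ_{ij} ≠ 0`. -/
def shapeClasses (lam : Dual S) : Set (Set (Fin n)) :=
  {s | ∃ i : Fin n,
    s = {j | Relation.EqvGen (fun a b => lamEntry lam a b ≠ 0 ∨ lamEntry lam b a ≠ 0) i j}}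

/-! ### Explicit functionals -/

/-- The linear functional on `S` determined by a matrix `c` of coefficients:
`X ↦ ∑_{i,j} c_{ij} X_{ij}`; it sends the elementary matrix `e_{ij}` to `c_{ij}`. -/
def lamOf (S : NonUnitalSubalgebra F (Matrix (Fin n) (Fin n) F))
    (c : Matrix (Fin n) (Fin n) F) : Dual S where
  toFun X := ∑ i : Fin n, ∑ j : Fin n, c i j * (X : Matrix (Fin n) (Fin n) F) i j
  map_add' X Y := by
    simp [Matrix.add_apply, mul_add, Finset.sum_add_distrib]
  map_smul' a X := by
    simp only [RingHom.id_apply, smul_eq_mul, Finset.mul_sum]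
    refine Finset.sum_congr rfl fun i _ => Finset.sum_congr rfl fun j _ => ?_
    have : ((a • X : ↥S) : Matrix (Fin n) (Fin n) F) i j
        = a * (X : Matrix (Fin n) (Fin n) F) i j := by
      simp [Matrix.smul_apply]
    rw [this]; ring

/-- The coordinate functional `e*_{ij} : X ↦ X_{ij}` on `S`. -/
def coordFn (S : NonUnitalSubalgebra F (Matrix (Fin n) (Fin n) F))
    (a : Fin n × Fin n) : Dual S where
  toFun X := (X : Matrix (Fin n) (Fin n) F) a.1 a.2
  map_add' X Y := by simp
  map_smul' c X := by simp

/-- Matrix entry in (1-based) coordinates, `0` when out of range. -/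
def ent (X : Matrix (Fin n) (Fin n) F) (a : ℕ × ℕ) : F :=
  if h : 1 ≤ a.1 ∧ a.1 ≤ n ∧ 1 ≤ a.2 ∧ a.2 ≤ n then
    X ⟨a.1 - 1, by omega⟩ ⟨a.2 - 1, by omega⟩ else 0


/-! ### The specific functional `λ` on `u_{n}(q)` from Section 3.3 of the paper -/

/-- The coefficient matrix of the functional `λ` (positions written 1-based). -/
def lamCoef (r n : ℕ) (F : Type*) [Field F] : Matrix (Fin n) (Fin n) F := fun a b =>
  let j := (a : ℕ) + 1
  let k := (b : ℕ) + 1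
  if 1 ≤ j ∧ j ≤ r ∧ k = j + r then -1
  else if 1 ≤ j ∧ j ≤ r ∧ k = j + 2 * r then 1
  else if r + 1 ≤ j ∧ j ≤ 2 * r ∧ k = j + 2 * r + 1 then -1
  else if r + 1 ≤ j ∧ j ≤ 2 * r ∧ k = j + 3 * r + 1 then 1
  else if 2 * r + 1 ≤ j ∧ j ≤ 3 * r + 1 ∧ k = j + r then 1
  else if 3 * r + 2 ≤ j ∧ j ≤ 4 * r + 1 ∧ k = j + 2 * r then 1
  else 0

/-- The linear functional `λ ∈ u_n(q)*` of the paper, determined by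
`λ(e_{jk}) = -1` if `j = k - r ∈ [1,r]`, `λ(e_{jk}) = 1` if `j = k - 2r ∈ [1,r]`,
`λ(e_{jk}) = -1` if `j = k - 2r - 1 ∈ [r+1,2r]`, `λ(e_{jk}) = 1` if `j = k - 3r - 1 ∈ [r+1,2r]`,
`λ(e_{jk}) = 1` if `j = k - r ∈ [2r+1,3r+1]`, `λ(e_{jk}) = 1` if `j = k - 2r ∈ [3r+2,4r+1]`,
and `λ(e_{jk}) = 0` otherwise. -/
def lamStd (r n : ℕ) (F : Type*) [Field F] [Fintype F] : Dual (uAlg n F) :=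
  lamOf (uAlg n F) (lamCoef r n F)

/-! ### Pattern algebras -/

/-- A set of positions is closed when `(i,j) ∈ P` and `(j,k) ∈ P` imply `(i,k) ∈ P`. -/
def IsClosedPositions {n : ℕ} (P : Set (Fin n × Fin n)) : Prop :=
  ∀ i j k : Fin n, (i, j) ∈ P → (j, k) ∈ P → (i, k) ∈ P

/-- The subspace of matrices supported on a set `P` of positions. -/
def patSub (n : ℕ) (F : Type*) [Field F] (P : Set (Fin n × Fin n)) :
    Submodule F (Matrix (Fin n) (Fin n) F) where
  carrier := {M | ∀ i j : Fin n, (i, j) ∉ P → M i j = 0}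
  add_mem' := fun ha hb i j hij => by
    rw [Matrix.add_apply, ha i j hij, hb i j hij, add_zero]
  zero_mem' := fun i j _ => rfl
  smul_mem' := fun c a ha i j hij => by rw [Matrix.smul_apply, ha i j hij, smul_zero]

/-- The pattern algebra `u_{n,P}(q)` of matrices supported on a closed set `P` of
positions. -/
def patAlg (n : ℕ) (F : Type*) [Field F] (P : Set (Fin n × Fin n))
    (hC : IsClosedPositions P) : NonUnitalSubalgebra F (Matrix (Fin n) (Fin n) F) :=
  (patSub n F P).toNonUnitalSubalgebra (by
    intro X Y hX hY
    intro i j hij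
    rw [Matrix.mul_apply]
    refine Finset.sum_eq_zero fun k _ => ?_
    by_cases hik : (i, k) ∈ P
    · by_cases hkj : (k, j) ∈ P
      · exact absurd (hC i k j hik hkj) hij
      · rw [hY k j hkj, mul_zero]
    · rw [hX i k hik, zero_mul])


/-! ### The algebra `a_n(q)` of superdiagonal-constant strictly upper triangular matrices -/

/-- Membership condition for `a_n(q)` : strictly upper triangular, and constant along each
superdiagonal. -/
def aCond {n : ℕ} (M : Matrix (Fin n) (Fin n) F) : Prop :=
  (∀ i j : Fin n, j ≤ i → M i j = 0) ∧
  ∀ i j i' j' : Fin n, (i : ℕ) < j → (i' : ℕ) < j' →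
    (i : ℕ) + (j' : ℕ) = (i' : ℕ) + (j : ℕ) → M i j = M i' j'

lemma aCond_mul {n : ℕ} {X Y : Matrix (Fin n) (Fin n) F}
    (hX : aCond X) (hY : aCond Y) : aCond (X * Y) := by
  obtain ⟨hXu, hXc⟩ := hX
  obtain ⟨hYu, hYc⟩ := hY
  have hupper : ∀ i j : Fin n, j ≤ i → (X * Y) i j = 0 := by
    intro i j hij
    rw [Matrix.mul_apply]
    refine Finset.sum_eq_zero fun k _ => ?_
    by_cases hk : k ≤ i
    · rw [hXu i k hk, zero_mul]
    · rw [hYu k j (hij.trans (not_le.mp hk).le), mul_zero]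
  refine ⟨hupper, ?_⟩
  intro i j i' j' hij hij' hsum
  rw [Matrix.mul_apply, Matrix.mul_apply]
  have h1 : ∀ k : Fin n, ¬((i : ℕ) < (k : ℕ) ∧ (k : ℕ) < (j : ℕ)) → X i k * Y k j = 0 := by
    intro k hk
    by_cases h : (i : ℕ) < (k : ℕ)
    · have hjk : j ≤ k := by rw [Fin.le_def]; omega
      rw [hYu k j hjk, mul_zero]
    · have hki : k ≤ i := by rw [Fin.le_def]; omega
      rw [hXu i k hki, zero_mul]
  have h2 : ∀ k : Fin n, ¬((i' : ℕ) < (k : ℕ) ∧ (k : ℕ) < (j' : ℕ)) → X i' k * Y k j' = 0 := by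
    intro k hk
    by_cases h : (i' : ℕ) < (k : ℕ)
    · have hjk : j' ≤ k := by rw [Fin.le_def]; omega
      rw [hYu k j' hjk, mul_zero]
    · have hki : k ≤ i' := by rw [Fin.le_def]; omega
      rw [hXu i' k hki, zero_mul]
  have e1 : ∑ k : Fin n, X i k * Y k j
      = ∑ k ∈ Finset.univ.filter (fun k : Fin n => (i : ℕ) < (k : ℕ) ∧ (k : ℕ) < (j : ℕ)),
        X i k * Y k j := by
    refine (Finset.sum_filter_of_ne fun k _ hk => ?_).symm
    by_contra hp
    exact hk (h1 k hp)
  have e2 : ∑ k : Fin n, X i' k * Y k j'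
      = ∑ k ∈ Finset.univ.filter (fun k : Fin n => (i' : ℕ) < (k : ℕ) ∧ (k : ℕ) < (j' : ℕ)),
        X i' k * Y k j' := by
    refine (Finset.sum_filter_of_ne fun k _ hk => ?_).symm
    by_contra hp
    exact hk (h2 k hp)
  rw [e1, e2]
  refine Finset.sum_bij'
    (fun (k : Fin n) (hk : k ∈ Finset.univ.filter
        (fun k : Fin n => (i : ℕ) < (k : ℕ) ∧ (k : ℕ) < (j : ℕ))) =>
      (⟨(i' : ℕ) + ((k : ℕ) - (i : ℕ)), by
        have h1 := (Finset.mem_filter.mp hk).2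
        have h2 := j'.isLt
        omega⟩ : Fin n))
    (fun (m : Fin n) (hm : m ∈ Finset.univ.filter
        (fun m : Fin n => (i' : ℕ) < (m : ℕ) ∧ (m : ℕ) < (j' : ℕ))) =>
      (⟨(i : ℕ) + ((m : ℕ) - (i' : ℕ)), by
        have h1 := (Finset.mem_filter.mp hm).2
        have h2 := j.isLt
        omega⟩ : Fin n))
    ?_ ?_ ?_ ?_ ?_
  · intro k hk
    have h1 := (Finset.mem_filter.mp hk).2
    simp only [Finset.mem_filter, Finset.mem_univ, true_and]
    constructor
    · omega
    · omega
  · intro m hm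
    have h1 := (Finset.mem_filter.mp hm).2
    simp only [Finset.mem_filter, Finset.mem_univ, true_and]
    constructor
    · omega
    · omega
  · intro k hk
    have h1 := (Finset.mem_filter.mp hk).2
    exact Fin.ext (by simp only [Fin.val_mk]; omega)
  · intro m hm
    have h1 := (Finset.mem_filter.mp hm).2
    exact Fin.ext (by simp only [Fin.val_mk]; omega)
  · intro k hk
    have h1 := (Finset.mem_filter.mp hk).2
    have hx : X i k = X i' ⟨(i' : ℕ) + ((k : ℕ) - (i : ℕ)), by
        have h2 := j'.isLt; omega⟩ := by
      refine hXc i k i' _ h1.1 ?_ ?_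
      · simp only [Fin.val_mk]; omega
      · simp only [Fin.val_mk]; omega
    have hy : Y k j = Y ⟨(i' : ℕ) + ((k : ℕ) - (i : ℕ)), by
        have h2 := j'.isLt; omega⟩ j' := by
      refine hYc k j _ j' h1.2 ?_ ?_
      · simp only [Fin.val_mk]; omega
      · simp only [Fin.val_mk]; omega
    rw [hx, hy]

/-- The algebra `a_n(q)` of strictly upper triangular matrices that are constant along each
superdiagonal. -/
def aAlg (n : ℕ) (F : Type*) [Field F] [Fintype F] :
    NonUnitalSubalgebra F (Matrix (Fin n) (Fin n) F) :=
  Submodule.toNonUnitalSubalgebra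
    { carrier := {M | aCond M}
      add_mem' := by
        rintro a b ⟨hau, hac⟩ ⟨hbu, hbc⟩
        refine ⟨fun i j hij => by rw [Matrix.add_apply, hau i j hij, hbu i j hij, add_zero],
          fun i j i' j' h1 h2 h3 => ?_⟩
        rw [Matrix.add_apply, Matrix.add_apply, hac i j i' j' h1 h2 h3,
          hbc i j i' j' h1 h2 h3]
      zero_mem' := ⟨fun i j _ => rfl, fun _ _ _ _ _ _ _ => rfl⟩
      smul_mem' := by
        rintro c a ⟨hau, hac⟩
        refine ⟨fun i j hij => by rw [Matrix.smul_apply, hau i j hij, smul_zero],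
          fun i j i' j' h1 h2 h3 => ?_⟩
        rw [Matrix.smul_apply, Matrix.smul_apply, hac i j i' j' h1 h2 h3] }
    (fun X Y hX hY => aCond_mul hX hY)

lemma mem_aAlg {M : Matrix (Fin n) (Fin n) F} : M ∈ aAlg n F ↔ aCond M := Iff.rfl


/-- Iterated product `a * b₁ * ⋯ * b_k` of elements of a (non-unital) algebra. -/
def mulChain {A : Type*} [Mul A] : A → List A → A
  | a, [] => a
  | a, b :: l => mulChain (a * b) l

/-! ### Algebra groups of abstract nilpotent algebras, via the unitization -/

section AlgebraGroup

variable (F : Type) [Field F] (A : Type) [NonUnitalRing A] [Module F A]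
  [SMulCommClass F A A] [IsScalarTower F A A]

/-- The algebra `A` is nilpotent: some power `A^k` vanishes, i.e. all products of `k`
elements of `A` are zero. -/
def IsNilpotentAlgebra : Prop :=
  ∃ k : ℕ, ∀ (a : A) (l : List A), l.length + 1 = k → mulChain a l = 0

/-- The algebra group `G = 1 + A`, realized as the group of units of the unitization
`F ⊕ A` whose scalar component equals `1` (for `A` nilpotent these are exactly the
elements `1 + X`, `X ∈ A`). -/
def algGrp : Subgroup (Unitization F A)ˣ where
  carrier := {u | ((u : Unitization F A)).fst = 1}
  one_mem' := by simp
  mul_mem' := by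
    intro a b ha hb
    show ((a * b : (Unitization F A)ˣ) : Unitization F A).fst = 1
    rw [Units.val_mul, Unitization.fst_mul]
    rw [Set.mem_setOf_eq] at ha hb
    rw [ha, hb, one_mul]
  inv_mem' := by
    intro a ha
    rw [Set.mem_setOf_eq] at ha
    show ((a⁻¹ : (Unitization F A)ˣ) : Unitization F A).fst = 1
    have h : ((a : Unitization F A) * ((a⁻¹ : (Unitization F A)ˣ) : Unitization F A)).fst
        = (1 : Unitization F A).fst := by
      rw [Units.mul_inv]
    rw [Unitization.fst_mul, ha, one_mul, Unitization.fst_one] at h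
    exact h

variable {F A}

/-- The element `g - 1 ∈ A` for `g` in the algebra group `1 + A`. -/
def sndU (g : ↥(algGrp F A)) : A := ((g : (Unitization F A)ˣ) : Unitization F A).snd

/-- The function `θ_λ(g) = θ(λ(g - 1))` on the algebra group `1 + A`. -/
def thetaFunU (θ : AddChar F ℂ) (lam : A →ₗ[F] F) : ↥(algGrp F A) → ℂ := fun g =>
  θ (lam (sndU g))

/-- The coadjoint action: `λ^g(X) = λ(g X g⁻¹)`. -/
def coadjU (g : ↥(algGrp F A)) (lam : A →ₗ[F] F) : A →ₗ[F] F where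
  toFun X := lam ((((g : (Unitization F A)ˣ) : Unitization F A) * (X : Unitization F A) *
    ((((g : (Unitization F A)ˣ))⁻¹ : (Unitization F A)ˣ) : Unitization F A)).snd)
  map_add' X Y := by
    rw [← map_add, ← Unitization.snd_add]
    refine congrArg lam (congrArg (fun u : Unitization F A => u.snd) ?_)
    rw [Unitization.inr_add]
    noncomm_ring
  map_smul' c X := by
    rw [RingHom.id_apply, ← map_smul, ← Unitization.snd_smul]
    refine congrArg lam (congrArg (fun u : Unitization F A => u.snd) ?_)
    rw [Unitization.inr_smul, mul_smul_comm, smul_mul_assoc]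

/-- The coadjoint orbit of `λ`. -/
def coadjOrbitU (lam : A →ₗ[F] F) : Set (A →ₗ[F] F) :=
  {nu | ∃ g : ↥(algGrp F A), nu = coadjU g lam}

/-- The Kirillov function `ψ_λ` of the algebra group `1 + A`. -/
def kirillovU (θ : AddChar F ℂ) (lam : A →ₗ[F] F) : ↥(algGrp F A) → ℂ := fun g =>
  ((Real.sqrt (Nat.card (coadjOrbitU lam)) : ℂ))⁻¹ *
    ∑ᶠ nu ∈ coadjOrbitU lam, thetaFunU θ nu g

/-- The underlying set of the algebra subgroup `L̄_λ = 1 + l̄_λ`. -/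
def LsetU (lam : A →ₗ[F] F) : Set ↥(algGrp F A) := {g | sndU g ∈ lbar lam}

/-- The underlying set of the algebra subgroup `S̄_λ = 1 + s̄_λ`. -/
def SsetU (lam : A →ₗ[F] F) : Set ↥(algGrp F A) := {g | sndU g ∈ sbar lam}

/-- The character `ξ_λ = Ind_{L̄_λ}^G(θ_λ)` of the algebra group `1 + A`. -/
def xiU (θ : AddChar F ℂ) (lam : A →ₗ[F] F) : ↥(algGrp F A) → ℂ :=
  indFun (LsetU lam) (thetaFunU θ lam)

/-- The set `Ξ_λ = {gλsg⁻¹ : g ∈ G, s ∈ S̄_λ}`, i.e. the functionals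
`ν(X) = λ(g⁻¹ X g s⁻¹)`. -/
def XiSet (lam : A →ₗ[F] F) : Set (A →ₗ[F] F) :=
  {nu | ∃ g s : ↥(algGrp F A), s ∈ SsetU lam ∧ ∀ X : A,
    nu X = lam (((((g : (Unitization F A)ˣ))⁻¹ : (Unitization F A)ˣ) * (X : Unitization F A) *
      ((g : (Unitization F A)ˣ) : Unitization F A) *
      ((((s : (Unitization F A)ˣ))⁻¹ : (Unitization F A)ˣ) : Unitization F A)).snd)}

end AlgebraGroup


/-- The supercharacter `χ_κ` of `A_n(q)`, given by `χ_κ(g) = q^(n-2) θ(g_{1,n})` if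
`g - 1 ∈ F_q · e_{1,n}` and `χ_κ(g) = 0` otherwise. -/
def chiKappa {F : Type} [Field F] [Fintype F] (θ : AddChar F ℂ) (n : ℕ) (hn : 1 < n) :
    ↥(grp (aAlg n F)) → ℂ := fun g =>
  if ∃ c : F, mat g - 1 = c • Matrix.single (⟨0, by omega⟩ : Fin n)
      (⟨n - 1, by omega⟩ : Fin n) (1 : F)
  then (Fintype.card F : ℂ) ^ (n - 2) * θ (mat g ⟨0, by omega⟩ ⟨n - 1, by omega⟩)
  else 0


/-! ### Auxiliary results for Statement 14 -/

section Aux14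

variable {n : ℕ} {F : Type} [Field F] [Fintype F]

lemma pow_entry_eq_zero {X : Matrix (Fin n) (Fin n) F}
    (hX : ∀ i j : Fin n, j ≤ i → X i j = 0) :
    ∀ (k : ℕ) (i j : Fin n), (j : ℕ) < (i : ℕ) + k → (X ^ k) i j = 0 := by
  intro k
  induction k with
  | zero =>
      intro i j h
      rw [pow_zero]
      exact Matrix.one_apply_ne (by intro hij; subst hij; omega)
  | succ k ih =>
      intro i j h
      rw [pow_succ, Matrix.mul_apply]
      refine Finset.sum_eq_zero fun m _ => ?_
      by_cases hm : (m : ℕ) < (i : ℕ) + k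
      · rw [ih i m hm, zero_mul]
      · rw [hX m j (by rw [Fin.le_def]; omega), mul_zero]

lemma isUnit_one_add_of_mem {X : Matrix (Fin n) (Fin n) F} (hX : X ∈ aAlg n F) :
    IsUnit (1 + X) := by
  refine IsNilpotent.isUnit_one_add ⟨n, ?_⟩
  ext i j
  rw [Matrix.zero_apply]
  exact pow_entry_eq_zero (mem_aAlg.mp hX).1 n i j (by omega)

/-- Constructor for elements of the algebra group `A_n(q)`. -/
def mkA {X : Matrix (Fin n) (Fin n) F} (hX : X ∈ aAlg n F) : ↥(grp (aAlg n F)) :=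
  ⟨(isUnit_one_add_of_mem hX).unit, by
    rw [mem_grp_iff, IsUnit.unit_spec]
    simpa using hX⟩

lemma mat_mkA {X : Matrix (Fin n) (Fin n) F} (hX : X ∈ aAlg n F) :
    mat (mkA hX) = 1 + X := IsUnit.unit_spec _

lemma aCond_comm {X Y : Matrix (Fin n) (Fin n) F} (hX : aCond X) (hY : aCond Y) :
    X * Y = Y * X := by
  obtain ⟨hXu, hXc⟩ := hX
  obtain ⟨hYu, hYc⟩ := hY
  ext i j
  rw [Matrix.mul_apply, Matrix.mul_apply]
  have h1 : ∀ k : Fin n, ¬((i : ℕ) < (k : ℕ) ∧ (k : ℕ) < (j : ℕ)) → X i k * Y k j = 0 := by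
    intro k hk
    by_cases h : (i : ℕ) < (k : ℕ)
    · rw [hYu k j (by rw [Fin.le_def]; omega), mul_zero]
    · rw [hXu i k (by rw [Fin.le_def]; omega), zero_mul]
  have h2 : ∀ k : Fin n, ¬((i : ℕ) < (k : ℕ) ∧ (k : ℕ) < (j : ℕ)) → Y i k * X k j = 0 := by
    intro k hk
    by_cases h : (i : ℕ) < (k : ℕ)
    · rw [hXu k j (by rw [Fin.le_def]; omega), mul_zero]
    · rw [hYu i k (by rw [Fin.le_def]; omega), zero_mul]
  rw [show ∑ k : Fin n, X i k * Y k j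
      = ∑ k ∈ Finset.univ.filter (fun k : Fin n => (i : ℕ) < (k : ℕ) ∧ (k : ℕ) < (j : ℕ)),
        X i k * Y k j from
    (Finset.sum_filter_of_ne fun k _ hk => by by_contra hp; exact hk (h1 k hp)).symm]
  rw [show ∑ k : Fin n, Y i k * X k j
      = ∑ k ∈ Finset.univ.filter (fun k : Fin n => (i : ℕ) < (k : ℕ) ∧ (k : ℕ) < (j : ℕ)),
        Y i k * X k j from
    (Finset.sum_filter_of_ne fun k _ hk => by by_contra hp; exact hk (h2 k hp)).symm]
  refine Finset.sum_bij'
    (fun (k : Fin n) (hk : k ∈ Finset.univ.filter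
        (fun k : Fin n => (i : ℕ) < (k : ℕ) ∧ (k : ℕ) < (j : ℕ))) =>
      (⟨(i : ℕ) + (j : ℕ) - (k : ℕ), by
        have h1 := (Finset.mem_filter.mp hk).2
        have h2 := j.isLt
        omega⟩ : Fin n))
    (fun (k : Fin n) (hk : k ∈ Finset.univ.filter
        (fun k : Fin n => (i : ℕ) < (k : ℕ) ∧ (k : ℕ) < (j : ℕ))) =>
      (⟨(i : ℕ) + (j : ℕ) - (k : ℕ), by
        have h1 := (Finset.mem_filter.mp hk).2
        have h2 := j.isLt
        omega⟩ : Fin n))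
    ?_ ?_ ?_ ?_ ?_
  · intro k hk
    have h1 := (Finset.mem_filter.mp hk).2
    simp only [Finset.mem_filter, Finset.mem_univ, true_and, Fin.val_mk]
    omega
  · intro k hk
    have h1 := (Finset.mem_filter.mp hk).2
    simp only [Finset.mem_filter, Finset.mem_univ, true_and, Fin.val_mk]
    omega
  · intro k hk
    have h1 := (Finset.mem_filter.mp hk).2
    exact Fin.ext (by simp only [Fin.val_mk]; omega)
  · intro k hk
    have h1 := (Finset.mem_filter.mp hk).2
    exact Fin.ext (by simp only [Fin.val_mk]; omega)
  · intro k hk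
    have h1 := (Finset.mem_filter.mp hk).2
    have hy : Y k j = Y i ⟨(i : ℕ) + (j : ℕ) - (k : ℕ), by omega⟩ :=
      hYc k j i _ h1.2 (by simp only [Fin.val_mk]; omega) (by simp only [Fin.val_mk]; omega)
    have hx : X i k = X ⟨(i : ℕ) + (j : ℕ) - (k : ℕ), by omega⟩ j :=
      hXc i k _ j h1.1 (by simp only [Fin.val_mk]; omega) (by simp only [Fin.val_mk]; omega)
    rw [← hy, ← hx]
    ring

end Aux14

section Aux14b

variable {n : ℕ} {F : Type} [Field F] [Fintype F]

/-- The matrix `X_v` with `v k` on the `(k+1)`-st superdiagonal. -/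
def Xv (n : ℕ) (v : Fin (n - 1) → F) : Matrix (Fin n) (Fin n) F :=
  Matrix.of fun i j => if h : (i : ℕ) < (j : ℕ) then
    v ⟨(j : ℕ) - (i : ℕ) - 1, by have := j.isLt; omega⟩ else 0

lemma Xv_mem (v : Fin (n - 1) → F) : Xv n v ∈ aAlg n F := by
  rw [mem_aAlg]
  constructor
  · intro i j hij
    exact dif_neg (by rw [Fin.le_def] at hij; omega)
  · intro i j i' j' h1 h2 h3
    show dite _ _ _ = dite _ _ _
    rw [dif_pos h1, dif_pos h2]
    exact congrArg v (Fin.ext (by simp only [Fin.val_mk]; omega))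

lemma card_grpA : Nat.card ↥(grp (aAlg n F)) = Fintype.card F ^ (n - 1) := by
  have e : (Fin (n - 1) → F) ≃ ↥(grp (aAlg n F)) := by
    refine ⟨fun v => mkA (Xv_mem v),
      fun g => fun k => (mat g - 1) ⟨0, by have := k.isLt; omega⟩
        ⟨(k : ℕ) + 1, by have := k.isLt; omega⟩, ?_, ?_⟩
    · intro v
      funext k
      have h1 : mat (mkA (Xv_mem v)) - 1 = Xv n v := by
        rw [mat_mkA, add_sub_cancel_left]
      beta_reduce
      rw [h1]
      rw [Xv, Matrix.of_apply]
      rw [dif_pos (by simp only [Fin.val_mk]; omega)]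
      exact congrArg v (Fin.ext (by simp only [Fin.val_mk]; omega))
    · intro g
      apply Subtype.ext
      apply Units.ext
      show mat (mkA _) = mat g
      rw [mat_mkA]
      have key : Xv n (fun k => (mat g - 1) ⟨0, by have := k.isLt; omega⟩
          ⟨(k : ℕ) + 1, by have := k.isLt; omega⟩) = mat g - 1 := by
        ext i j
        obtain ⟨hu, hcst⟩ := mem_aAlg.mp (mat_mem g)
        show dite _ _ _ = _
        by_cases h : (i : ℕ) < (j : ℕ)
        · rw [dif_pos h]
          exact hcst ⟨0, by have := j.isLt; omega⟩ ⟨(j : ℕ) - (i : ℕ) - 1 + 1, by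
              have := j.isLt; omega⟩ i j
            (by simp only [Fin.val_mk]; omega) h (by simp only [Fin.val_mk]; omega)
        · rw [dif_neg h]
          exact (hu i j (by rw [Fin.le_def]; omega)).symm
      rw [key]
      exact (eq_add_of_sub_eq' rfl).symm
  rw [← Nat.card_congr e, Nat.card_eq_fintype_card, Fintype.card_fun, Fintype.card_fin]

lemma mul_comm_grpA (a b : ↥(grp (aAlg n F))) : a * b = b * a := by
  apply Subtype.ext
  apply Units.ext
  show mat a * mat b = mat b * mat a
  have hAB := aCond_comm (mem_aAlg.mp (mat_mem a)) (mem_aAlg.mp (mat_mem b))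
  have e1 : mat a * mat b
      = 1 + (mat a - 1) + (mat b - 1) + (mat a - 1) * (mat b - 1) := by noncomm_ring
  have e2 : mat b * mat a
      = 1 + (mat b - 1) + (mat a - 1) + (mat b - 1) * (mat a - 1) := by noncomm_ring
  rw [e1, e2, hAB]
  abel

/-- The elementary matrix `e_{1,n}`. -/
def eM (m : ℕ) (K : Type) [Field K] (hm : 1 < m) : Matrix (Fin m) (Fin m) K :=
  Matrix.single (⟨0, Nat.zero_lt_of_lt hm⟩ : Fin m)
    (⟨m - 1, Nat.sub_lt (Nat.zero_lt_of_lt hm) Nat.one_pos⟩ : Fin m) (1 : K)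

lemma eM_apply (hn : 1 < n) (i j : Fin n) :
    eM n F hn i j = if (i : ℕ) = 0 ∧ (j : ℕ) = n - 1 then 1 else 0 := by
  show Matrix.single _ _ _ i j = _
  rw [Matrix.single]
  show (if (⟨0, Nat.zero_lt_of_lt hn⟩ : Fin n) = i
      ∧ (⟨n - 1, Nat.sub_lt (Nat.zero_lt_of_lt hn) Nat.one_pos⟩ : Fin n) = j
    then (1 : F) else 0) = _
  congr 1
  simp only [eq_iff_iff]
  constructor
  · rintro ⟨h1, h2⟩
    exact ⟨by rw [← h1], by rw [← h2]⟩
  · rintro ⟨h1, h2⟩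
    exact ⟨Fin.ext (by simp [h1]), Fin.ext (by simp [h2])⟩

lemma eM_mul_eM (hn : 1 < n) : eM n F hn * eM n F hn = 0 := by
  ext a b
  rw [Matrix.mul_apply, Matrix.zero_apply]
  refine Finset.sum_eq_zero fun k _ => ?_
  rw [eM_apply hn, eM_apply hn]
  by_cases h : (a : ℕ) = 0 ∧ (k : ℕ) = n - 1
  · rw [if_pos h, if_neg (by omega), mul_zero]
  · rw [if_neg h, zero_mul]

lemma smul_eM_mul (hn : 1 < n) (c d : F) : (c • eM n F hn) * (d • eM n F hn) = 0 := by
  rw [Matrix.smul_mul, Matrix.mul_smul, eM_mul_eM hn, smul_zero, smul_zero]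

lemma smul_eM_mem (hn : 1 < n) (c : F) : c • eM n F hn ∈ aAlg n F := by
  rw [mem_aAlg]
  constructor
  · intro i j hij
    rw [Matrix.smul_apply, eM_apply hn, if_neg (by rw [Fin.le_def] at hij; omega), smul_zero]
  · intro i j i' j' h1 h2 h3
    rw [Matrix.smul_apply, Matrix.smul_apply, eM_apply hn, eM_apply hn]
    have hj := j.isLt; have hj' := j'.isLt
    by_cases h : (i : ℕ) = 0 ∧ (j : ℕ) = n - 1
    · rw [if_pos h, if_pos (by omega)]
    · rw [if_neg h, if_neg (by omega)]

/-- The `(1,n)` entry of `g - 1`. -/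
def entv (hn : 1 < n) (g : ↥(grp (aAlg n F))) : F :=
  (mat g - 1) ⟨0, Nat.zero_lt_of_lt hn⟩
    ⟨n - 1, Nat.sub_lt (Nat.zero_lt_of_lt hn) Nat.one_pos⟩

lemma entv_of (hn : 1 < n) {g : ↥(grp (aAlg n F))} {c : F}
    (hc : mat g - 1 = c • eM n F hn) : entv hn g = c := by
  rw [entv, hc, Matrix.smul_apply, eM_apply hn, if_pos ⟨rfl, rfl⟩, smul_eq_mul, mul_one]

lemma entv_eq (hn : 1 < n) (g : ↥(grp (aAlg n F))) :
    entv hn g = mat g ⟨0, Nat.zero_lt_of_lt hn⟩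
      ⟨n - 1, Nat.sub_lt (Nat.zero_lt_of_lt hn) Nat.one_pos⟩ := by
  rw [entv, Matrix.sub_apply,
    Matrix.one_apply_ne (Fin.ne_of_val_ne (show (0 : ℕ) ≠ n - 1 by omega)), sub_zero]

/-- The subgroup `Z = 1 + F e_{1,n}` of `A_n(q)`. -/
def Zsub (hn : 1 < n) : Subgroup ↥(grp (aAlg n F)) where
  carrier := {g | ∃ c : F, mat g - 1 = c • eM n F hn}
  one_mem' := ⟨0, by
    show ((((1 : ↥(grp (aAlg n F))) : (Matrix (Fin n) (Fin n) F)ˣ)) : Matrix (Fin n) (Fin n) F)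
      - 1 = (0 : F) • eM n F hn
    rw [OneMemClass.coe_one, Units.val_one, sub_self, zero_smul]⟩
  mul_mem' := by
    rintro a b ⟨c, hc⟩ ⟨d, hd⟩
    refine ⟨c + d, ?_⟩
    have e1 : mat a * mat b - 1
        = (mat a - 1) + (mat b - 1) + (mat a - 1) * (mat b - 1) := by noncomm_ring
    show mat a * mat b - 1 = _
    rw [e1, hc, hd, smul_eM_mul hn, add_zero, add_smul]
  inv_mem' := by
    rintro a ⟨c, hc⟩
    refine ⟨-c, ?_⟩
    have hmat : mat a = 1 + c • eM n F hn := eq_add_of_sub_eq' hc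
    have hprod : mat a * (1 + (-c) • eM n F hn) = 1 := by
      have e1 : ∀ A B : Matrix (Fin n) (Fin n) F, (1 + A) * (1 + B) = 1 + A + B + A * B :=
        fun A B => by noncomm_ring
      rw [hmat, e1, smul_eM_mul hn, add_zero, add_assoc, ← add_smul, add_neg_cancel,
        zero_smul, add_zero]
    have hinv : mat a⁻¹ = 1 + (-c) • eM n F hn := by
      show (((a : (Matrix (Fin n) (Fin n) F)ˣ)⁻¹ : (Matrix (Fin n) (Fin n) F)ˣ)
        : Matrix (Fin n) (Fin n) F) = _
      exact Units.inv_eq_of_mul_eq_one_right hprod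
    show mat a⁻¹ - 1 = _
    rw [hinv, add_sub_cancel_left]

lemma mem_Zsub_iff (hn : 1 < n) {g : ↥(grp (aAlg n F))} :
    g ∈ Zsub hn ↔ ∃ c : F, mat g - 1 = c • eM n F hn := Iff.rfl

lemma entv_mul (hn : 1 < n) {a b : ↥(grp (aAlg n F))} (ha : a ∈ Zsub hn) (hb : b ∈ Zsub hn) :
    entv hn (a * b) = entv hn a + entv hn b := by
  obtain ⟨c, hc⟩ := ha
  obtain ⟨d, hd⟩ := hb
  have hab : mat (a * b) - 1 = (c + d) • eM n F hn := by
    have e1 : mat a * mat b - 1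
        = (mat a - 1) + (mat b - 1) + (mat a - 1) * (mat b - 1) := by noncomm_ring
    show mat a * mat b - 1 = _
    rw [e1, hc, hd, smul_eM_mul hn, add_zero, add_smul]
  rw [entv_of hn hab, entv_of hn hc, entv_of hn hd]

lemma card_Zsub (hn : 1 < n) : Nat.card ↥(Zsub (F := F) hn) = Fintype.card F := by
  let f : F → ↥(Zsub (F := F) hn) := fun c => ⟨mkA (smul_eM_mem hn c),
    ⟨c, by rw [mat_mkA, add_sub_cancel_left]⟩⟩
  have hent : ∀ c : F, entv hn (f c).1 = c := fun c =>
    entv_of hn (by rw [mat_mkA, add_sub_cancel_left])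
  have hbij : Function.Bijective f := by
    constructor
    · intro c c' h
      rw [← hent c, ← hent c', h]
    · intro z
      obtain ⟨c, hc⟩ := z.2
      refine ⟨c, ?_⟩
      apply Subtype.ext
      apply Subtype.ext
      apply Units.ext
      show mat (mkA (smul_eM_mem hn c)) = mat z.1
      rw [mat_mkA, ← hc]
      exact (eq_add_of_sub_eq' rfl).symm
  rw [← Nat.card_congr (Equiv.ofBijective f hbij), Nat.card_eq_fintype_card]

/-- The character `ψ : Z → ℂˣ`, `1 + c·e_{1,n} ↦ θ(c)`. -/
def psiZ (θ : AddChar F ℂ) (hn : 1 < n) : ↥(Zsub (F := F) hn) →* ℂˣ where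
  toFun z := (θ.val_isUnit (entv hn z.1)).unit
  map_one' := by
    apply Units.ext
    show θ (entv hn ((1 : ↥(Zsub (F := F) hn)).1)) = 1
    have h1 : entv hn (1 : ↥(grp (aAlg n F))) = 0 := by
      have hm : mat (1 : ↥(grp (aAlg n F))) = 1 := by
        show (((1 : ↥(grp (aAlg n F))) : (Matrix (Fin n) (Fin n) F)ˣ)
          : Matrix (Fin n) (Fin n) F) = 1
        rw [OneMemClass.coe_one, Units.val_one]
      rw [entv, hm, sub_self, Matrix.zero_apply]
    rw [OneMemClass.coe_one, h1, AddChar.map_zero_eq_one]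
  map_mul' a b := by
    apply Units.ext
    show θ (entv hn ((a * b).1)) = θ (entv hn a.1) * θ (entv hn b.1)
    have h1 : (a * b).1 = a.1 * b.1 := rfl
    rw [h1, entv_mul hn a.2 b.2, AddChar.map_add_eq_mul]

end Aux14b

section AbstractChar

variable {G : Type} [Group G] [Finite G]


lemma homUnits_equiv_nonempty (hc : ∀ a b : G, a * b = b * a) : Nonempty ((G →* ℂˣ) ≃ G) := by
  letI : CommGroup G := { ‹Group G› with mul_comm := hc }
  haveI : NeZero ((Monoid.exponent G : ℂ)) :=
    ⟨Nat.cast_ne_zero.mpr (Monoid.exponent_ne_zero_of_finite)⟩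
  exact ⟨(CommGroup.monoidHom_mulEquiv_of_hasEnoughRootsOfUnity G ℂ).some.toEquiv⟩

lemma exists_hom_ne_one (hc : ∀ a b : G, a * b = b * a) {a : G} (ha : a ≠ 1) :
    ∃ φ : G →* ℂˣ, φ a ≠ 1 := by
  letI : CommGroup G := { ‹Group G› with mul_comm := hc }
  haveI : NeZero ((Monoid.exponent G : ℂ)) :=
    ⟨Nat.cast_ne_zero.mpr (Monoid.exponent_ne_zero_of_finite)⟩
  exact CommGroup.exists_apply_ne_one_of_hasEnoughRootsOfUnity G ℂ ha

/-- restriction as a monoid hom -/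
def resHom (Z : Subgroup G) : (G →* ℂˣ) →* (↥Z →* ℂˣ) where
  toFun φ := φ.comp Z.subtype
  map_one' := MonoidHom.one_comp _
  map_mul' _ _ := MonoidHom.mul_comp _ _ _

lemma ker_equiv (hc : ∀ a b : G, a * b = b * a) (Z : Subgroup G) (hZ : Z.Normal) :
    Nonempty (↥(resHom Z).ker ≃ ((G ⧸ Z) →* ℂˣ)) := by
  refine ⟨Equiv.symm ⟨fun χ => ⟨χ.comp (QuotientGroup.mk' Z), ?_⟩, fun φ =>
    QuotientGroup.lift Z (φ.1) (fun z hz => ?_), ?_, ?_⟩⟩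
  · rw [MonoidHom.mem_ker]
    ext z
    simp only [resHom, MonoidHom.coe_mk, OneHom.coe_mk, MonoidHom.comp_apply,
      MonoidHom.one_apply, Subgroup.coe_subtype, QuotientGroup.mk'_apply]
    rw [(QuotientGroup.eq_one_iff _).mpr z.2, map_one]
  · have h := φ.2
    rw [MonoidHom.mem_ker] at h
    have := DFunLike.congr_fun h (⟨z, hz⟩ : ↥Z)
    simpa [resHom] using this
  · intro χ
    ext x
    simp
  · intro φ
    apply Subtype.ext
    ext g
    simp

lemma exists_extension (hc : ∀ a b : G, a * b = b * a) (Z : Subgroup G) (ψ : ↥Z →* ℂˣ) :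
    ∃ φ : G →* ℂˣ, (resHom Z) φ = ψ := by
  letI : CommGroup G := { ‹Group G› with mul_comm := hc }
  haveI hZ : Z.Normal := inferInstance
  obtain ⟨eG⟩ := homUnits_equiv_nonempty (G := G) hc
  obtain ⟨eZ⟩ := homUnits_equiv_nonempty (G := ↥Z) (fun a b => mul_comm a b)
  obtain ⟨eQ⟩ := homUnits_equiv_nonempty (G := G ⧸ Z) (fun a b => mul_comm a b)
  haveI : Finite (G →* ℂˣ) := Finite.of_equiv _ eG.symm
  haveI : Finite (↥Z →* ℂˣ) := Finite.of_equiv _ eZ.symm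
  obtain ⟨eK⟩ := ker_equiv hc Z hZ
  have hker : Nat.card ↥(resHom Z).ker = Nat.card (G ⧸ Z) :=
    (Nat.card_congr eK).trans (Nat.card_congr eQ)
  have h1 : Nat.card (G →* ℂˣ) =
      Nat.card ((G →* ℂˣ) ⧸ (resHom Z).ker) * Nat.card ↥(resHom Z).ker :=
    Subgroup.card_eq_card_quotient_mul_card_subgroup _
  have h2 : Nat.card ((G →* ℂˣ) ⧸ (resHom Z).ker) = Nat.card ↥(resHom Z).range :=
    Nat.card_congr (QuotientGroup.quotientKerEquivRange (resHom Z)).toEquiv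
  have h3 : Nat.card G = Nat.card (G ⧸ Z) * Nat.card ↥Z :=
    Subgroup.card_eq_card_quotient_mul_card_subgroup _
  have hQpos : 0 < Nat.card (G ⧸ Z) := Nat.card_pos
  have hrange : Nat.card ↥(resHom Z).range = Nat.card (↥Z →* ℂˣ) := by
    have := h1
    rw [h2, hker, Nat.card_congr eG] at this
    rw [Nat.card_congr eZ]
    rw [h3] at this
    have h4 : Nat.card ↥(resHom Z).range * Nat.card (G ⧸ Z)
        = Nat.card ↥Z * Nat.card (G ⧸ Z) := by rw [← this]; ring
    exact Nat.eq_of_mul_eq_mul_right hQpos h4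
  have htop : (resHom Z).range = ⊤ := Subgroup.eq_top_of_card_eq _ hrange
  have : ψ ∈ (resHom Z).range := htop ▸ Subgroup.mem_top ψ
  exact this

theorem hom_fiber_package (hc : ∀ a b : G, a * b = b * a) (Z : Subgroup G) (ψ : ↥Z →* ℂˣ) :
    ∃ T : Finset (G →* ℂˣ),
      (∀ φ ∈ T, ∀ z : ↥Z, φ (z : G) = ψ z) ∧
      T.card = Nat.card (G ⧸ Z) ∧
      (∀ g : G, g ∉ Z → ∑ φ ∈ T, ((φ g : ℂˣ) : ℂ) = 0) := by
  letI : CommGroup G := { ‹Group G› with mul_comm := hc }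
  haveI hZ : Z.Normal := inferInstance
  obtain ⟨eG⟩ := homUnits_equiv_nonempty (G := G) hc
  haveI : Finite (G →* ℂˣ) := Finite.of_equiv _ eG.symm
  haveI : Fintype (G →* ℂˣ) := Fintype.ofFinite _
  obtain ⟨φ₀, hφ₀⟩ := exists_extension hc Z ψ
  have happ : ∀ (φ : G →* ℂˣ), resHom Z φ = ψ → ∀ z : ↥Z, φ (z : G) = ψ z := by
    intro φ h z
    have := DFunLike.congr_fun h z
    simpa [resHom] using this
  classical
  refine ⟨Finset.univ.filter (fun φ => resHom Z φ = ψ), ?_, ?_, ?_⟩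
  · intro φ hφ z
    rw [Finset.mem_filter] at hφ
    have := DFunLike.congr_fun hφ.2 z
    simpa [resHom] using this
  · -- cardinality
    obtain ⟨eK⟩ := ker_equiv hc Z hZ
    obtain ⟨eQ⟩ := homUnits_equiv_nonempty (G := G ⧸ Z) (fun a b => mul_comm a b)
    have e2 : {φ : G →* ℂˣ // resHom Z φ = ψ} ≃ ↥(resHom Z).ker := by
      refine ⟨fun φ => ⟨φ₀⁻¹ * φ.1, ?_⟩, fun χ => ⟨φ₀ * χ.1, ?_⟩, ?_, ?_⟩
      · rw [MonoidHom.mem_ker]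
        refine MonoidHom.ext fun z => ?_
        show (φ₀ ((z : ↥Z) : G))⁻¹ * φ.1 ((z : ↥Z) : G) = 1
        rw [happ φ₀ hφ₀ z, happ φ.1 φ.2 z, inv_mul_cancel]
      · have h := χ.2
        rw [MonoidHom.mem_ker] at h
        have h' : ∀ z : ↥Z, χ.1 (z : G) = 1 := by
          intro z
          have := DFunLike.congr_fun h z
          simpa [resHom] using this
        refine MonoidHom.ext fun z => ?_
        show φ₀ ((z : ↥Z) : G) * χ.1 ((z : ↥Z) : G) = ψ z
        rw [happ φ₀ hφ₀ z, h' z, mul_one]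
      · intro φ; apply Subtype.ext
        refine MonoidHom.ext fun x => ?_
        show φ₀ x * ((φ₀ x)⁻¹ * φ.1 x) = φ.1 x
        rw [← mul_assoc, mul_inv_cancel, one_mul]
      · intro χ; apply Subtype.ext
        refine MonoidHom.ext fun x => ?_
        show (φ₀ x)⁻¹ * (φ₀ x * χ.1 x) = χ.1 x
        rw [← mul_assoc, inv_mul_cancel, one_mul]
    calc (Finset.univ.filter (fun φ => resHom Z φ = ψ)).card
        = Fintype.card {φ : G →* ℂˣ // resHom Z φ = ψ} := (Fintype.card_subtype _).symm
      _ = Nat.card {φ : G →* ℂˣ // resHom Z φ = ψ} := (Nat.card_eq_fintype_card).symm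
      _ = Nat.card ↥(resHom Z).ker := Nat.card_congr e2
      _ = Nat.card ((G ⧸ Z) →* ℂˣ) := Nat.card_congr eK
      _ = Nat.card (G ⧸ Z) := Nat.card_congr eQ
  · intro g hg
    have hg1 : (g : G ⧸ Z) ≠ 1 := by
      rw [Ne, QuotientGroup.eq_one_iff]; exact hg
    obtain ⟨φ', hφ'⟩ := exists_hom_ne_one (G := G ⧸ Z) (fun a b => mul_comm a b) hg1
    set χ : G →* ℂˣ := φ'.comp (QuotientGroup.mk' Z) with hχdef
    have hχker : resHom Z χ = 1 := by
      ext z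
      simp only [resHom, hχdef, MonoidHom.coe_mk, OneHom.coe_mk, MonoidHom.comp_apply,
        MonoidHom.one_apply, Subgroup.coe_subtype, QuotientGroup.mk'_apply]
      rw [(QuotientGroup.eq_one_iff _).mpr z.2, map_one]
    have hχg : χ g = φ' (g : G ⧸ Z) := rfl
    set s : ℂ := ∑ φ ∈ Finset.univ.filter (fun φ => resHom Z φ = ψ), ((φ g : ℂˣ) : ℂ) with hs
    have key : s * ((χ g : ℂˣ) : ℂ) = s := by
      rw [hs, Finset.sum_mul]
      refine Finset.sum_nbij' (fun φ => φ * χ) (fun φ => φ * χ⁻¹) ?_ ?_ ?_ ?_ ?_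
      · intro φ hφ
        rw [Finset.mem_filter] at hφ ⊢
        refine ⟨Finset.mem_univ _, ?_⟩
        have h' : ∀ z : ↥Z, χ (z : G) = 1 := by
          intro z
          have := DFunLike.congr_fun hχker z
          simpa [resHom] using this
        refine MonoidHom.ext fun z => ?_
        show φ ((z : ↥Z) : G) * χ ((z : ↥Z) : G) = ψ z
        rw [happ φ hφ.2 z, h' z, mul_one]
      · intro φ hφ
        rw [Finset.mem_filter] at hφ ⊢
        refine ⟨Finset.mem_univ _, ?_⟩
        have h' : ∀ z : ↥Z, χ (z : G) = 1 := by
          intro z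
          have := DFunLike.congr_fun hχker z
          simpa [resHom] using this
        refine MonoidHom.ext fun z => ?_
        show φ ((z : ↥Z) : G) * (χ ((z : ↥Z) : G))⁻¹ = ψ z
        rw [happ φ hφ.2 z, h' z, inv_one, mul_one]
      · intro φ _
        refine MonoidHom.ext fun x => ?_
        show φ x * χ x * (χ x)⁻¹ = φ x
        rw [mul_assoc, mul_inv_cancel, mul_one]
      · intro φ _
        refine MonoidHom.ext fun x => ?_
        show φ x * (χ x)⁻¹ * χ x = φ x
        rw [mul_assoc, inv_mul_cancel, mul_one]
      · intro φ _
        show ((φ g : ℂˣ) : ℂ) * ((χ g : ℂˣ) : ℂ) = (((φ * χ) g : ℂˣ) : ℂ)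
        rw [MonoidHom.mul_apply, Units.val_mul]
    have hne : ((χ g : ℂˣ) : ℂ) ≠ 1 := by
      intro h
      exact hχg ▸ hφ' <| by rw [← hχg]; exact Units.ext (by simpa using h)
    have : s * (((χ g : ℂˣ) : ℂ) - 1) = 0 := by rw [mul_sub, key, mul_one, sub_self]
    rcases mul_eq_zero.mp this with h | h
    · exact h
    · exact absurd (by linear_combination h) hne

end AbstractChar

lemma isCharacter_sum_homUnits {G : Type} [Group G] (T : Finset (G →* ℂˣ)) :
    IsCharacter (fun g => ∑ φ ∈ T, ((φ g : ℂˣ) : ℂ)) := by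
  classical
  let ρ : Representation ℂ G (↥T → ℂ) :=
    { toFun := fun g => LinearMap.pi (fun i => ((i.1 g : ℂˣ) : ℂ) • LinearMap.proj i)
      map_one' := by
        refine LinearMap.ext fun v => ?_
        funext i
        simp [LinearMap.pi_apply]
      map_mul' := fun g h => by
        refine LinearMap.ext fun v => ?_
        funext i
        simp only [LinearMap.pi_apply, LinearMap.smul_apply, LinearMap.proj_apply,
          Module.End.mul_apply, map_mul, Units.val_mul, smul_eq_mul]
        ring }
  refine ⟨FDRep.of ρ, ?_⟩
  funext g
  show LinearMap.trace ℂ (↥T → ℂ) (ρ g) = _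
  rw [LinearMap.trace_eq_matrix_trace ℂ (Pi.basisFun ℂ ↥T)]
  rw [Matrix.trace]
  rw [show ∑ φ ∈ T, ((φ g : ℂˣ) : ℂ) = ∑ i : ↥T, ((i.1 g : ℂˣ) : ℂ) from
    (Finset.sum_coe_sort T _).symm]
  refine Finset.sum_congr rfl fun i _ => ?_
  rw [Matrix.diag_apply, LinearMap.toMatrix_apply]
  simp [ρ, LinearMap.pi_apply, Pi.basisFun_apply, Pi.single_apply]

/-- The function `χ_κ` is a character of `A_n(q)` and equals the sum of
`q^(n-2)` distinct group homomorphisms `A_n(q) → ℂ^×`. -/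
theorem statement14 (p : ℕ) (hp : p.Prime) (F : Type) [Field F] [Fintype F] [CharP F p]
    (θ : AddChar F ℂ) (hθ : θ ≠ 1) (n : ℕ) (hn : 1 < n) :
    IsCharacter (chiKappa θ n hn) ∧
    ∃ T : Finset (↥(grp (aAlg n F)) →* ℂˣ),
      T.card = Fintype.card F ^ (n - 2) ∧
      chiKappa θ n hn = fun g => ∑ φ ∈ T, (φ g : ℂ) := by
  classical
  haveI : Finite ↥(grp (aAlg n F)) := inferInstance
  have hc := fun a b : ↥(grp (aAlg n F)) => mul_comm_grpA a b
  obtain ⟨T, hT1, hT2, hT3⟩ := hom_fiber_package hc (Zsub hn) (psiZ θ hn)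
  have hq : Nat.card (↥(grp (aAlg n F)) ⧸ Zsub (F := F) hn) = Fintype.card F ^ (n - 2) := by
    have h3 := Subgroup.card_eq_card_quotient_mul_card_subgroup (Zsub (F := F) hn)
    rw [card_grpA, card_Zsub hn] at h3
    have hqpos : 0 < Fintype.card F := Fintype.card_pos
    have hps : Fintype.card F ^ (n - 1) = Fintype.card F ^ (n - 2) * Fintype.card F := by
      rw [← pow_succ]
      congr 1
      omega
    rw [hps] at h3
    exact (Nat.eq_of_mul_eq_mul_right hqpos h3).symm
  have hsum : chiKappa θ n hn = fun g => ∑ φ ∈ T, ((φ g : ℂˣ) : ℂ) := by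
    funext g
    simp only [chiKappa]
    split_ifs with hg
    · have hgZ : g ∈ Zsub hn := hg
      have hval : ∀ φ ∈ T, (φ g : ℂˣ) = psiZ θ hn ⟨g, hgZ⟩ := fun φ hφ => hT1 φ hφ ⟨g, hgZ⟩
      have hpsi : ((psiZ θ hn ⟨g, hgZ⟩ : ℂˣ) : ℂ) = θ (entv hn g) := IsUnit.unit_spec _
      have hent : entv hn g = mat g ⟨0, by omega⟩ ⟨n - 1, by omega⟩ := entv_eq hn g
      rw [Finset.sum_congr rfl fun φ hφ => congrArg Units.val (hval φ hφ)]
      rw [hpsi, hent, Finset.sum_const, hT2, hq, nsmul_eq_mul]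
      push_cast
      ring
    · exact (hT3 g hg).symm
  constructor
  · rw [hsum]
    exact isCharacter_sum_homUnits T
  · exact ⟨T, by rw [hT2, hq], hsum⟩


end Paper
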